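/- Let G be a finite simple connected graph and let D be a nonempty dominating target of G such that no vertex of D belongs to a diametral pair (that is, e(d) < diam(G) for every d ∈ D). Then for every diametral pair (x,y) of G, both x and y belong to N(D). -/

import Mathlib

variable {V : Type*}

/-- The closed neighbourhood `N[v]` of a vertex. -/
def closedNbhd (G : SimpleGraph V) (v : V) : Set V := insert v (G.neighborSet v)

/-- `N[S] = ⋃_{v ∈ S} N[v]`. -/
def closedNbhdSet (G : SimpleGraph V) (S : Set V) : Set V := ⋃ v ∈ S, closedNbhd G v

/-- A vertex `v` is an extremity if the subgraph induced on `V \ N[v]` is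
connected (possibly empty). -/
def IsExtremity (G : SimpleGraph V) (v : V) : Prop :=
  (G.induce (closedNbhd G v)ᶜ).Preconnected

/-- `M` is a module: every vertex outside `M` is adjacent to all of `M` or none of `M`. -/
def IsModuleSet (G : SimpleGraph V) (M : Set V) : Prop :=
  ∀ z ∉ M, ∀ x ∈ M, ∀ y ∈ M, (G.Adj z x ↔ G.Adj z y)

/-- A graph is prime if its only modules are `∅`, `V` and the singletons. -/
def IsPrimeGraph (G : SimpleGraph V) : Prop :=
  ∀ M : Set V, IsModuleSet G M → M = ∅ ∨ M = Set.univ ∨ ∃ v, M = {v}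

/-- Eccentricity of a vertex in a finite graph. -/
noncomputable def ecc [Fintype V] (G : SimpleGraph V) (u : V) : ℕ :=
  Finset.univ.sup (G.dist u)

/-- Diameter of a finite graph. -/
noncomputable def gdiam [Fintype V] (G : SimpleGraph V) : ℕ :=
  Finset.univ.sup fun u => ecc G u

/-- `u ⊥_w v`: vertices `u` and `v` lie in different connected components of the
subgraph induced on `V \ N[w]`. -/
def Perp (G : SimpleGraph V) (w u v : V) : Prop :=
  u ∉ closedNbhd G w ∧ v ∉ closedNbhd G w ∧
    ¬ ∃ p : G.Walk u v, ∀ z ∈ p.support, z ∉ closedNbhd G w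

/-- `S` is `u`-transitive: for every `x ∈ S` and vertex `y` distinct from and
nonadjacent to `x`, `x ⊥_y u` implies `y ∈ S`. -/
def UTransitive (G : SimpleGraph V) (u : V) (S : Set V) : Prop :=
  ∀ x ∈ S, ∀ y : V, y ≠ x → ¬ G.Adj x y → Perp G y x u → y ∈ S

/-- `S` is a dominating set: every vertex lies in `N[S]`. -/
def IsDominatingSet (G : SimpleGraph V) (S : Set V) : Prop :=
  ∀ v : V, ∃ s ∈ S, v ∈ closedNbhd G s

/-- `D` is a dominating target: every superset of `D` inducing a connected
subgraph is a dominating set. -/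
def IsDomTarget (G : SimpleGraph V) (D : Set V) : Prop :=
  ∀ S : Set V, D ⊆ S → (G.induce S).Connected → IsDominatingSet G S

/-- An asteroidal set: an independent set `A` such that for every `a ∈ A`, all
vertices of `A \ {a}` lie in a single connected component of the subgraph
induced on `V \ N[a]`. -/
def IsAsteroidalSet (G : SimpleGraph V) (A : Set V) : Prop :=
  (A.Pairwise fun x y => ¬ G.Adj x y) ∧
  ∀ a ∈ A, ∀ b ∈ A, ∀ c ∈ A, b ≠ a → c ≠ a →
    ∃ p : G.Walk b c, ∀ z ∈ p.support, z ∉ closedNbhd G a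

lemma key_side [Fintype V] (G : SimpleGraph V) (hG : G.Connected)
    (D : Set V) (hne : D.Nonempty) (hD : IsDomTarget G D)
    (hnd : ∀ d ∈ D, ecc G d < gdiam G)
    (x y : V) (hxy : G.dist x y = gdiam G) :
    x ∈ closedNbhdSet G D \ D := by
  obtain ⟨d0, hd0⟩ := hne
  have hdle : ∀ d ∈ D, ∀ v, G.dist d v < gdiam G := by
    intro d hd v
    exact lt_of_le_of_lt (Finset.le_sup (f := G.dist d) (Finset.mem_univ v)) (hnd d hd)
  have hxD : x ∉ D := by
    intro hx
    exact absurd hxy (Nat.ne_of_lt (hdle x hx y))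
  have hxyne : x ≠ y := by
    intro h
    have := hdle d0 hd0 x
    have h0 : G.dist x y = 0 := by rw [h]; simp
    omega
  have hpos : 0 < G.dist x y := hG.pos_dist_of_ne hxyne
  -- gdiam ≥ 2
  have hdiam2 : 2 ≤ gdiam G := by
    by_contra h
    have h1 : gdiam G = 1 := by omega
    have he0 : ecc G d0 = 0 := by have := hnd d0 hd0; omega
    have hdx : G.dist d0 x = 0 :=
      Nat.le_zero.mp (he0 ▸ Finset.le_sup (f := G.dist d0) (Finset.mem_univ x))
    have hdy : G.dist d0 y = 0 :=
      Nat.le_zero.mp (he0 ▸ Finset.le_sup (f := G.dist d0) (Finset.mem_univ y))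
    have : d0 = x := hG.dist_eq_zero_iff.mp hdx
    have : d0 = y := hG.dist_eq_zero_iff.mp hdy
    exact hxyne (by subst_vars; rfl)
  have hnadj : ¬ G.Adj x y := by
    intro h
    have : G.dist x y = 1 := SimpleGraph.dist_eq_one_iff_adj.mpr h
    omega
  refine ⟨?_, hxD⟩
  by_contra hx
  -- the set S
  set S : Set V := {z | G.dist z y < gdiam G ∧ x ∉ closedNbhd G z} with hS
  have hDS : D ⊆ S := by
    intro d hd
    refine ⟨hdle d hd y, ?_⟩
    intro hmem
    exact hx (Set.mem_biUnion hd hmem)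
  have hyS : y ∈ S := by
    constructor
    · have h0 : G.dist y y = 0 := hG.dist_eq_zero_iff.mpr rfl
      omega
    · intro hmem
      rcases hmem with h | h
      · exact hxyne h
      · exact hnadj ((SimpleGraph.mem_neighborSet G y x).mp h).symm
  -- connectivity: every z ∈ S reaches y inside S
  have hreach : ∀ n : ℕ, ∀ z, (hz : z ∈ S) → G.dist z y ≤ n →
      (G.induce S).Reachable ⟨z, hz⟩ ⟨y, hyS⟩ := by
    intro n
    induction n with
    | zero =>
      intro z hz hle
      have : z = y := hG.dist_eq_zero_iff.mp (Nat.le_zero.mp hle)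
      subst this
      exact SimpleGraph.Reachable.refl _
    | succ n ih =>
      intro z hz hle
      by_cases h0 : G.dist z y = 0
      · have : z = y := hG.dist_eq_zero_iff.mp h0
        subst this
        exact SimpleGraph.Reachable.refl _
      · obtain ⟨p, hp⟩ := SimpleGraph.exists_walk_of_dist_ne_zero h0
        cases p with
        | nil => exact absurd SimpleGraph.dist_self h0
        | @cons _ w _ hadj q =>
          have hq : q.length + 1 = G.dist z y := by
            simpa [SimpleGraph.Walk.length_cons] using hp
          have hwy : G.dist w y ≤ q.length := SimpleGraph.dist_le q
          have hz1 : G.dist z y < gdiam G := hz.1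
          have hwS : w ∈ S := by
            constructor
            · omega
            · intro hmem
              rcases hmem with h | h
              · subst h
                have : G.dist x y ≤ q.length := hwy
                omega
              · have hax : G.Adj x w := (SimpleGraph.mem_neighborSet G w x).mp h |>.symm
                have : G.dist x y ≤ G.dist x w + G.dist w y := hG.dist_triangle
                have hxw : G.dist x w = 1 := SimpleGraph.dist_eq_one_iff_adj.mpr hax
                omega
          have hadj' : (G.induce S).Adj ⟨z, hz⟩ ⟨w, hwS⟩ := hadj
          exact (hadj'.reachable).trans (ih w hwS (by omega))
  have hconn : (G.induce S).Connected := by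
    rw [SimpleGraph.connected_iff]
    refine ⟨?_, ⟨⟨y, hyS⟩⟩⟩
    intro a b
    exact ((hreach _ a.1 a.2 le_rfl).trans (hreach _ b.1 b.2 le_rfl).symm)
  obtain ⟨s, hsS, hxs⟩ := hD S hDS hconn x
  exact hsS.2 hxs

theorem stmt_7 [Fintype V] (G : SimpleGraph V) (hG : G.Connected)
    (D : Set V) (hne : D.Nonempty) (hD : IsDomTarget G D)
    (hnd : ∀ d ∈ D, ecc G d < gdiam G) :
    ∀ x y : V, G.dist x y = gdiam G →
      x ∈ closedNbhdSet G D \ D ∧ y ∈ closedNbhdSet G D \ D := by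
  intro x y hxy
  refine ⟨key_side G hG D hne hD hnd x y hxy, key_side G hG D hne hD hnd y x ?_⟩
  rwa [SimpleGraph.dist_comm]
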